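/- If Z is Poisson distributed with mean β and, conditionally on Z, Y is gamma distributed with shape δ+Z and rate 1/c, then the Laplace transform of Y satisfies E[exp(-sY)] = (1+cs)^{-δ} · exp(-βcs/(1+cs)) for all s ≥ 0. -/

import Mathlib

open MeasureTheory ProbabilityTheory Real
open scoped NNReal ENNReal

/-- The noncentral gamma distribution `NcGa(δ, β, 1/c)`: a Poisson(β) mixture of
Gamma(δ + k, 1/c) distributions (shape-rate parametrization, rate `c⁻¹`). -/
noncomputable def ncGamma (δ : ℝ) (β : ℝ≥0) (c : ℝ) : Measure ℝ :=
  Measure.sum fun k : ℕ => poissonPMF β k • gammaMeasure (δ + k) c⁻¹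

lemma gammaPDFReal_exp_mul {a r s : ℝ} (hr : 0 < r) (hs : 0 ≤ s) (y : ℝ) :
    Real.exp (-s * y) * gammaPDFReal a r y
      = (r / (r + s)) ^ a * gammaPDFReal a (r + s) y := by
  have hrs : 0 < r + s := by linarith
  unfold gammaPDFReal
  split_ifs with hy
  · have h1 : (r / (r + s)) ^ a * (r + s) ^ a = r ^ a := by
      rw [← Real.mul_rpow (by positivity) hrs.le, div_mul_cancel₀ _ hrs.ne']
    have h2 : Real.exp (-s * y) * Real.exp (-(r * y)) = Real.exp (-((r + s) * y)) := by
      rw [← Real.exp_add]; ring_nf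
    calc Real.exp (-s * y) * (r ^ a / Real.Gamma a * y ^ (a - 1) * Real.exp (-(r * y)))
        = (r ^ a / Real.Gamma a * y ^ (a - 1)) * (Real.exp (-s * y) * Real.exp (-(r * y))) := by
          ring
      _ = (r ^ a / Real.Gamma a * y ^ (a - 1)) * Real.exp (-((r + s) * y)) := by rw [h2]
      _ = (r / (r + s)) ^ a * ((r + s) ^ a / Real.Gamma a * y ^ (a - 1)
            * Real.exp (-((r + s) * y))) := by rw [← h1]; ring
  · simp

/-- Laplace transform of the gamma distribution, `ℝ≥0∞`-valued. -/
lemma gamma_laplace_lintegral {a r s : ℝ} (ha : 0 < a) (hr : 0 < r) (hs : 0 ≤ s) :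
    ∫⁻ y, ENNReal.ofReal (Real.exp (-s * y)) ∂(gammaMeasure a r)
      = ENNReal.ofReal ((r / (r + s)) ^ a) := by
  have hrs : 0 < r + s := by linarith
  have hm : Measurable (gammaPDF a r) := (measurable_gammaPDFReal a r).ennreal_ofReal
  rw [gammaMeasure, lintegral_withDensity_eq_lintegral_mul _ hm (by fun_prop)]
  have hpt : ∀ y : ℝ, gammaPDF a r y * ENNReal.ofReal (Real.exp (-s * y))
      = ENNReal.ofReal ((r / (r + s)) ^ a) * gammaPDF a (r + s) y := by
    intro y
    rw [gammaPDF, gammaPDF, ← ENNReal.ofReal_mul (by unfold gammaPDFReal; split_ifs <;> positivity),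
      ← ENNReal.ofReal_mul (by positivity), mul_comm (gammaPDFReal a r y),
      gammaPDFReal_exp_mul hr hs]
  simp only [Pi.mul_apply]
  have hm2 : Measurable (gammaPDF a (r + s)) := (measurable_gammaPDFReal a (r + s)).ennreal_ofReal
  rw [lintegral_congr hpt, lintegral_const_mul _ hm2, lintegral_gammaPDF_eq_one ha hrs, mul_one]

lemma exp_tsum_div (x : ℝ) : ∑' n : ℕ, x ^ n / n.factorial = Real.exp x := by
  rw [Real.exp_eq_exp_ℝ, NormedSpace.exp_eq_tsum_div]

/-- Laplace transform of the noncentral gamma distribution: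
`E[exp(-sY)] = (1+cs)^(-δ) * exp(-βcs/(1+cs))`. -/
theorem ncGamma_laplace (δ : ℝ) (β : ℝ≥0) (c s : ℝ)
    (hδ : 0 < δ) (hc : 0 < c) (hs : 0 ≤ s) :
    ∫ y, Real.exp (-s * y) ∂(ncGamma δ β c)
      = (1 + c * s) ^ (-δ) * Real.exp (-((β : ℝ) * c * s) / (1 + c * s)) := by
  have h1cs : 0 < 1 + c * s := by positivity
  set q : ℝ := (1 + c * s)⁻¹ with hq
  have hq0 : 0 < q := by positivity
  have hratio : c⁻¹ / (c⁻¹ + s) = q := by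
    rw [hq]
    field_simp
  -- convert Bochner integral to lintegral
  rw [MeasureTheory.integral_eq_lintegral_of_nonneg_ae
      (ae_of_all _ fun y => (Real.exp_pos _).le)
      ((by continuity : Continuous fun y : ℝ => Real.exp (-s * y)).aestronglyMeasurable)]
  rw [ncGamma, lintegral_sum_measure]
  have hterm : ∀ k : ℕ,
      ∫⁻ y, ENNReal.ofReal (Real.exp (-s * y)) ∂(poissonPMF β k • gammaMeasure (δ + k) c⁻¹)
        = ENNReal.ofReal (poissonPMFReal β k * (q ^ δ * q ^ k)) := by
    intro k
    rw [lintegral_smul_measure, gamma_laplace_lintegral (by positivity) (by positivity) hs,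
      hratio]
    have : q ^ (δ + (k : ℝ)) = q ^ δ * q ^ k := by
      rw [Real.rpow_add hq0, Real.rpow_natCast]
    rw [this]
    show ENNReal.ofReal (poissonPMFReal β k) * _ = _
    rw [← ENNReal.ofReal_mul poissonPMFReal_nonneg]
  rw [tsum_congr hterm]
  have hnn : ∀ k : ℕ, 0 ≤ poissonPMFReal β k * (q ^ δ * q ^ k) := by
    intro k; have := @poissonPMFReal_nonneg β k; positivity
  have hsummand : ∀ k : ℕ, poissonPMFReal β k * (q ^ δ * q ^ k)
      = (q ^ δ * Real.exp (-(β : ℝ))) * (((β : ℝ) * q) ^ k / k.factorial) := by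
    intro k
    unfold poissonPMFReal
    rw [mul_pow]
    field_simp
  have hsummable : Summable fun k : ℕ => poissonPMFReal β k * (q ^ δ * q ^ k) := by
    simp_rw [hsummand]
    exact (Real.summable_pow_div_factorial _).mul_left _
  rw [← ENNReal.ofReal_tsum_of_nonneg hnn hsummable]
  have htsum : ∑' k : ℕ, poissonPMFReal β k * (q ^ δ * q ^ k)
      = q ^ δ * (Real.exp (-(β : ℝ)) * Real.exp ((β : ℝ) * q)) := by
    simp_rw [hsummand]
    rw [tsum_mul_left, exp_tsum_div]
    ring
  rw [htsum, ENNReal.toReal_ofReal (by positivity)]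
  have hqδ : q ^ δ = (1 + c * s) ^ (-δ) := by
    rw [hq, Real.inv_rpow h1cs.le, ← Real.rpow_neg h1cs.le]
  have hexp : Real.exp (-(β : ℝ)) * Real.exp ((β : ℝ) * q)
      = Real.exp (-((β : ℝ) * c * s) / (1 + c * s)) := by
    rw [← Real.exp_add]
    congr 1
    rw [hq]
    field_simp
    ring
  rw [hqδ, hexp]
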